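/- arXiv:2508.17159 — 8 statements merged into one kernel-verified Lean document; each statement's English description precedes it below -/
import Mathlib

section
/- (Shadowing property of T.) For every ε > 0 there exists δ > 0 such that for every δ-pseudo orbit (x_k)_{k∈ℕ} of T there exists y ∈ [0,∞) with |T^k(y) − x_k| < ε for all k ∈ ℕ. -/
open Set Filter

noncomputable section

/-- `ell n = min {k ∈ ℤ⁺ : n ≤ 4^k}`. -/
def ell (n : ℕ) : ℕ := sInf {k : ℕ | 1 ≤ k ∧ n ≤ 4 ^ k}

/-- The value of the map `T` at the nonnegative integer `n`:
`0` if `n` is even and `4 ^ ℓ(n) + 1` if `n` is odd. -/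
def Tval (n : ℕ) : ℝ := if Even n then 0 else 4 ^ ell n + 1

/-- `T : [0,∞) → [0,∞)` is the unique continuous map which is affine on each
integer interval `[n-1, n]` and takes the value `Tval n` at every nonnegative
integer `n`.  This is expressed by linear interpolation on each `[n, n+1]`. -/
def IsT (T : ℝ → ℝ) : Prop :=
  ∀ n : ℕ, ∀ x ∈ Set.Icc (n : ℝ) (n + 1),
    T x = ((n : ℝ) + 1 - x) * Tval n + (x - (n : ℝ)) * Tval (n + 1)

/-- `(x_k)` is a `δ`-pseudo orbit of `T` in `[0,∞)`. -/
def IsPseudoOrbit (T : ℝ → ℝ) (δ : ℝ) (x : ℕ → ℝ) : Prop :=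
  (∀ k, 0 ≤ x k) ∧ ∀ k, |x (k + 1) - T (x k)| < δ

lemma ell_mem (n : ℕ) : 1 ≤ ell n ∧ n ≤ 4 ^ ell n := by
  have hne : ∃ k, 1 ≤ k ∧ n ≤ 4 ^ k := by
    refine ⟨max 1 n, le_max_left _ _, ?_⟩
    calc n ≤ 4 ^ n := (Nat.lt_pow_self (by norm_num : 1 < 4)).le
    _ ≤ 4 ^ max 1 n := Nat.pow_le_pow_right (by norm_num) (le_max_right _ _)
  exact Nat.sInf_mem hne

lemma Tval_nonneg (n : ℕ) : 0 ≤ Tval n := by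
  unfold Tval; split
  · exact le_refl _
  · positivity

def Sreal (n : ℕ) : ℝ := Tval n + Tval (n + 1)

def SN (n : ℕ) : ℕ := if Even n then 4 ^ ell (n + 1) + 1 else 4 ^ ell n + 1

lemma SN_cast (n : ℕ) : (SN n : ℝ) = Sreal n := by
  by_cases h : Even n
  · simp [SN, Sreal, Tval, h, Nat.even_add_one]
  · simp [SN, Sreal, Tval, h, Nat.even_add_one]

lemma five_le_SN (n : ℕ) : 5 ≤ SN n := by
  have h1 := (ell_mem n).1
  have h2 := (ell_mem (n+1)).1
  have k1 : 4 ≤ 4 ^ ell n := by calc 4 = 4 ^ 1 := by norm_num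
                                   _ ≤ 4 ^ ell n := Nat.pow_le_pow_right (by norm_num) h1
  have k2 : 4 ≤ 4 ^ ell (n+1) := by calc 4 = 4 ^ 1 := by norm_num
                                      _ ≤ 4 ^ ell (n+1) := Nat.pow_le_pow_right (by norm_num) h2
  unfold SN; split <;> omega

lemma five_le_Sreal (n : ℕ) : (5 : ℝ) ≤ Sreal n := by
  rw [← SN_cast]; exact_mod_cast five_le_SN n

lemma SN_not_even (n : ℕ) : ¬ Even (SN n) := by
  have h1 := (ell_mem n).1
  have h2 := (ell_mem (n+1)).1
  have e1 : Even (4 ^ ell n) := (Nat.even_pow.2 ⟨⟨2, by norm_num⟩, by omega⟩)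
  have e2 : Even (4 ^ ell (n+1)) := (Nat.even_pow.2 ⟨⟨2, by norm_num⟩, by omega⟩)
  unfold SN; split <;> simp [Nat.even_add_one, *]

lemma abs_Tval_sub (n : ℕ) : |Tval (n + 1) - Tval n| = Sreal n := by
  by_cases h : Even n
  · have h0 : Tval n = 0 := by simp [Tval, h]
    rw [Sreal, h0, sub_zero, zero_add, abs_of_nonneg (Tval_nonneg _)]
  · have h0 : Tval (n+1) = 0 := by simp [Tval, Nat.even_add_one, h]
    rw [Sreal, h0, zero_sub, add_zero, abs_neg, abs_of_nonneg (Tval_nonneg _)]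

lemma T_expand {T : ℝ → ℝ} (hT : IsT T) (n : ℕ) {u w : ℝ}
    (hu : u ∈ Icc (n : ℝ) (n + 1)) (hw : w ∈ Icc (n : ℝ) (n + 1)) :
    |T u - T w| = Sreal n * |u - w| := by
  rw [hT n u hu, hT n w hw]
  have h1 : ((n:ℝ) + 1 - u) * Tval n + (u - n) * Tval (n+1)
      - (((n:ℝ) + 1 - w) * Tval n + (w - n) * Tval (n+1))
      = (u - w) * (Tval (n+1) - Tval n) := by ring
  rw [h1, abs_mul, abs_Tval_sub, mul_comm]

lemma T_mem_range {T : ℝ → ℝ} (hT : IsT T) (n : ℕ) {u : ℝ}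
    (hu : u ∈ Icc (n : ℝ) (n + 1)) : T u ∈ Icc (0 : ℝ) (Sreal n) := by
  obtain ⟨h1, h2⟩ := hu
  have a1 := Tval_nonneg n
  have a2 := Tval_nonneg (n+1)
  rw [hT n u ⟨h1, h2⟩]
  constructor
  · nlinarith
  · rw [Sreal]; nlinarith

def Tinv (n : ℕ) (v : ℝ) : ℝ :=
  if Even n then (n : ℝ) + v / Sreal n else (n : ℝ) + 1 - v / Sreal n

lemma Tinv_spec {T : ℝ → ℝ} (hT : IsT T) (n : ℕ) {v : ℝ}
    (hv : v ∈ Icc (0 : ℝ) (Sreal n)) :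
    Tinv n v ∈ Icc (n : ℝ) (n + 1) ∧ T (Tinv n v) = v := by
  have hS : (5:ℝ) ≤ Sreal n := five_le_Sreal n
  have hS0 : (0:ℝ) < Sreal n := by linarith
  have hd0 : 0 ≤ v / Sreal n := div_nonneg hv.1 hS0.le
  have hd1 : v / Sreal n ≤ 1 := (div_le_one hS0).2 hv.2
  by_cases h : Even n
  · have hmem : (n:ℝ) + v / Sreal n ∈ Icc (n:ℝ) (n+1) := ⟨by linarith, by linarith⟩
    have h0 : Tval n = 0 := by simp [Tval, h]
    have h1 : Tval (n+1) = Sreal n := by rw [Sreal, h0, zero_add]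
    refine ⟨by simpa [Tinv, h] using hmem, ?_⟩
    rw [Tinv, if_pos h, hT n _ hmem, h0, h1]
    field_simp
    ring
  · have hmem : (n:ℝ) + 1 - v / Sreal n ∈ Icc (n:ℝ) (n+1) := ⟨by linarith, by linarith⟩
    have h0 : Tval (n+1) = 0 := by simp [Tval, Nat.even_add_one, h]
    have h1 : Tval n = Sreal n := by rw [Sreal, h0, add_zero]
    refine ⟨by simpa [Tinv, h] using hmem, ?_⟩
    rw [Tinv, if_neg h, hT n _ hmem, h0, h1]
    field_simp
    ring

lemma T_peak {T : ℝ → ℝ} (hT : IsT T) {m : ℕ} (hm : ¬ Even m) {t : ℝ}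
    (ht0 : 0 ≤ t) (ht1 : t ≤ 1) : T ((m:ℝ) + t) = T ((m:ℝ) - t) := by
  have hm0 : m ≠ 0 := by rintro rfl; exact hm Even.zero
  obtain ⟨m', rfl⟩ : ∃ m', m = m' + 1 := ⟨m - 1, by omega⟩
  have hm' : Even m' := by
    rcases Nat.even_or_odd m' with h | h
    · exact h
    · exact absurd (h.add_one) hm
  have hz1 : Tval m' = 0 := by simp [Tval, hm']
  have hz2 : Tval (m' + 1 + 1) = 0 := by simp [Tval, Nat.even_add_one, hm']
  have c1 : ((m' + 1 : ℕ) : ℝ) = (m' : ℝ) + 1 := by push_cast; ring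
  have h1 := hT (m' + 1) (((m' + 1 : ℕ) : ℝ) + t)
    (by rw [c1]; constructor <;> [linarith; linarith])
  have h2 := hT m' (((m' + 1 : ℕ) : ℝ) - t)
    (by rw [c1]; constructor <;> [linarith; linarith])
  rw [h1, h2, hz1, hz2, c1]
  ring

def brn (x : ℕ → ℝ) : ℕ → ℕ
  | 0 => ⌊x 0⌋₊
  | k + 1 => min ⌊x (k + 1)⌋₊ (SN (brn x k) - 1)

def xrefl (x : ℕ → ℝ) (k : ℕ) : ℝ :=
  ((brn x k : ℝ) + 1) - |x k - ((brn x k : ℝ) + 1)|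

lemma invariant {T : ℝ → ℝ} (hT : IsT T) {x : ℕ → ℝ} {δ : ℝ}
    (hx0 : ∀ k, 0 ≤ x k) (hxp : ∀ k, |x (k + 1) - T (x k)| < δ)
    (hδ0 : 0 < δ) (hδ : δ ≤ 1 / 2) :
    ∀ k, xrefl x k ∈ Icc ((brn x k : ℝ)) ((brn x k : ℝ) + 1) ∧
      |xrefl x k - x k| ≤ 2 * δ ∧ T (xrefl x k) = T (x k) := by
  intro k
  induction k with
  | zero =>
    have h0 : ((⌊x 0⌋₊ : ℕ) : ℝ) ≤ x 0 := Nat.floor_le (hx0 0)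
    have h1 : x 0 < (⌊x 0⌋₊ : ℝ) + 1 := Nat.lt_floor_add_one (x 0)
    have hr : xrefl x 0 = x 0 := by
      rw [xrefl]
      have : |x 0 - ((brn x 0 : ℝ) + 1)| = ((brn x 0 : ℝ) + 1) - x 0 := by
        rw [abs_of_nonpos (by simp only [brn]; linarith)]; ring
      rw [this]; ring
    rw [hr]
    refine ⟨⟨by simpa [brn] using h0, by simp only [brn]; linarith⟩, by simp; linarith, rfl⟩
  | succ k ih =>
    obtain ⟨ihm, ihd, ihT⟩ := ih
    set n := brn x k with hn
    have hTx : T (x k) ∈ Icc (0 : ℝ) (Sreal n) := by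
      rw [← ihT]; exact T_mem_range hT n ihm
    have hub : x (k + 1) < Sreal n + δ := by
      have h := abs_lt.1 (hxp k)
      linarith [hTx.2, h.2]
    have hSN5 : 5 ≤ SN n := five_le_SN n
    have hSNc : (SN n : ℝ) = Sreal n := SN_cast n
    by_cases hcase : ⌊x (k + 1)⌋₊ < SN n
    · have hbrn : brn x (k + 1) = ⌊x (k + 1)⌋₊ := by
        rw [brn, ← hn]; exact min_eq_left (by omega)
      have h0 : ((⌊x (k+1)⌋₊ : ℕ) : ℝ) ≤ x (k+1) := Nat.floor_le (hx0 (k+1))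
      have h1 : x (k+1) < (⌊x (k+1)⌋₊ : ℝ) + 1 := Nat.lt_floor_add_one _
      have hr : xrefl x (k + 1) = x (k + 1) := by
        rw [xrefl, hbrn]
        rw [abs_of_nonpos (by linarith)]; ring
      rw [hr, hbrn]
      exact ⟨⟨h0, h1.le⟩, by simp; linarith, rfl⟩
    · push_neg at hcase
      have hxge : ((SN n : ℕ) : ℝ) ≤ x (k + 1) :=
        le_trans (by exact_mod_cast hcase) (Nat.floor_le (hx0 (k+1)))
      have hbrn : brn x (k + 1) = SN n - 1 := by
        rw [brn, ← hn]; exact min_eq_right (by omega)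
      have hc : ((brn x (k+1) : ℕ) : ℝ) = (SN n : ℝ) - 1 := by
        rw [hbrn]; push_cast [Nat.cast_sub (by omega : 1 ≤ SN n)]; ring
      set t := x (k + 1) - (SN n : ℝ) with htdef
      have ht0 : 0 ≤ t := by rw [htdef]; linarith
      have ht1 : t < δ := by rw [htdef, hSNc]; linarith
      have hr : xrefl x (k + 1) = (SN n : ℝ) - t := by
        rw [xrefl, hc]
        have : (SN n : ℝ) - 1 + 1 = (SN n : ℝ) := by ring
        rw [this, abs_of_nonneg (by linarith)]
      have hx1 : x (k + 1) = (SN n : ℝ) + t := by rw [htdef]; ring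
      refine ⟨?_, ?_, ?_⟩
      · rw [hr, hc]; constructor <;> linarith
      · rw [hr, hx1]
        have : (SN n : ℝ) - t - ((SN n : ℝ) + t) = -(2*t) := by ring
        rw [this, abs_neg, abs_of_nonneg (by linarith)]; linarith
      · rw [hr, hx1]
        exact (T_peak hT (SN_not_even n) ht0 (by linarith)).symm

def bk (x : ℕ → ℝ) (N : ℕ) : ℕ → ℝ
  | 0 => xrefl x N
  | j + 1 => Tinv (brn x (N - (j + 1))) (bk x N j)

lemma backward {T : ℝ → ℝ} (hT : IsT T) {x : ℕ → ℝ} {δ : ℝ}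
    (hx0 : ∀ k, 0 ≤ x k) (hxp : ∀ k, |x (k + 1) - T (x k)| < δ)
    (hδ0 : 0 < δ) (hδ : δ ≤ 1 / 2) (N : ℕ) :
    ∀ j, j ≤ N →
      (bk x N j ∈ Icc ((brn x (N - j) : ℝ)) ((brn x (N - j) : ℝ) + 1)) ∧
      |bk x N j - xrefl x (N - j)| ≤ 3 * δ / 4 ∧
      (0 < j → T (bk x N j) = bk x N (j - 1)) := by
  have inv := invariant hT hx0 hxp hδ0 hδ
  intro j
  induction j with
  | zero =>
    intro _
    refine ⟨by simpa [bk] using (inv N).1, by simp [bk]; positivity,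
      fun h => absurd h (lt_irrefl 0)⟩
  | succ j ih =>
    intro hj
    have hjN : j ≤ N := by omega
    obtain ⟨ihm, ihd, _⟩ := ih hjN
    set p := N - (j + 1) with hp
    have hpe : N - j = p + 1 := by omega
    rw [hpe] at ihm ihd
    have hb : brn x (p + 1) + 1 ≤ SN (brn x p) := by
      rw [brn]
      have := five_le_SN (brn x p)
      omega
    have hbk_range : bk x N j ∈ Icc (0 : ℝ) (Sreal (brn x p)) := by
      constructor
      · exact le_trans (Nat.cast_nonneg _) ihm.1
      · have hcb : ((brn x (p + 1) : ℝ) + 1) ≤ (SN (brn x p) : ℝ) := by exact_mod_cast hb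
        rw [← SN_cast]; linarith [ihm.2]
    have hstep : bk x N (j + 1) = Tinv (brn x p) (bk x N j) := by
      rw [bk, hp]
    obtain ⟨hmem', hTeq⟩ := Tinv_spec hT (brn x p) hbk_range
    have hmem2 : bk x N (j + 1) ∈ Icc ((brn x p : ℝ)) ((brn x p : ℝ) + 1) := by
      rw [hstep]; exact hmem'
    have hT2 : T (bk x N (j + 1)) = bk x N j := by rw [hstep]; exact hTeq
    have hexp : |T (bk x N (j + 1)) - T (xrefl x p)|
        = Sreal (brn x p) * |bk x N (j + 1) - xrefl x p| :=
      T_expand hT (brn x p) hmem2 (inv p).1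
    have hchain : |T (bk x N (j + 1)) - T (xrefl x p)| ≤ 15 * δ / 4 := by
      rw [hT2, (inv p).2.2]
      calc |bk x N j - T (x p)|
          ≤ |bk x N j - xrefl x (p + 1)| + |xrefl x (p + 1) - T (x p)| :=
            abs_sub_le _ _ _
        _ ≤ |bk x N j - xrefl x (p + 1)|
            + (|xrefl x (p + 1) - x (p + 1)| + |x (p + 1) - T (x p)|) := by
            linarith [abs_sub_le (xrefl x (p + 1)) (x (p + 1)) (T (x p))]
        _ ≤ 3 * δ / 4 + (2 * δ + δ) := by
            have h1 := (inv (p + 1)).2.1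
            have h2 := (hxp p).le
            linarith [ihd]
        _ = 15 * δ / 4 := by ring
    have hdist : |bk x N (j + 1) - xrefl x p| ≤ 3 * δ / 4 := by
      have h5 := five_le_Sreal (brn x p)
      have habs : 0 ≤ |bk x N (j + 1) - xrefl x p| := abs_nonneg _
      nlinarith [hexp, hchain]
    refine ⟨hmem2, hdist, fun _ => ?_⟩
    simpa using hT2

lemma iterate_bk {T : ℝ → ℝ} (hT : IsT T) {x : ℕ → ℝ} {δ : ℝ}
    (hx0 : ∀ k, 0 ≤ x k) (hxp : ∀ k, |x (k + 1) - T (x k)| < δ)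
    (hδ0 : 0 < δ) (hδ : δ ≤ 1 / 2) (N : ℕ) :
    ∀ k, k ≤ N → T^[k] (bk x N N) = bk x N (N - k) := by
  intro k
  induction k with
  | zero => intro _; simp
  | succ k ih =>
    intro hk
    have hkN : k ≤ N := by omega
    rw [Function.iterate_succ_apply', ih hkN]
    have h3 := (backward hT hx0 hxp hδ0 hδ N (N - k) (by omega)).2.2 (by omega)
    have h4 : N - k - 1 = N - (k + 1) := by omega
    rw [h3, h4]

lemma cauchy_est {T : ℝ → ℝ} (hT : IsT T) {x : ℕ → ℝ} {δ : ℝ}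
    (hx0 : ∀ k, 0 ≤ x k) (hxp : ∀ k, |x (k + 1) - T (x k)| < δ)
    (hδ0 : 0 < δ) (hδ : δ ≤ 1 / 2) (N : ℕ) :
    ∀ j, j ≤ N →
      |T^[N - j] (bk x N N) - T^[N - j] (bk x (N + 1) (N + 1))| ≤ (1 / 5 : ℝ) ^ j := by
  intro j
  induction j with
  | zero =>
    intro _
    simp only [Nat.sub_zero, pow_zero]
    have e1 : T^[N] (bk x N N) = bk x N 0 := by
      have := iterate_bk hT hx0 hxp hδ0 hδ N N le_rfl
      simpa using this
    have e2 : T^[N] (bk x (N + 1) (N + 1)) = bk x (N + 1) 1 := by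
      have := iterate_bk hT hx0 hxp hδ0 hδ (N + 1) N (by omega)
      rw [this]; congr 1; omega
    have m1 : bk x N 0 ∈ Icc ((brn x N : ℝ)) ((brn x N : ℝ) + 1) := by
      have := (backward hT hx0 hxp hδ0 hδ N 0 (Nat.zero_le N)).1
      simpa using this
    have m2 : bk x (N + 1) 1 ∈ Icc ((brn x N : ℝ)) ((brn x N : ℝ) + 1) := by
      have := (backward hT hx0 hxp hδ0 hδ (N + 1) 1 (by omega)).1
      simpa using this
    rw [e1, e2]
    exact abs_le.2 ⟨by linarith [m1.1, m1.2, m2.1, m2.2], by linarith [m1.1, m1.2, m2.1, m2.2]⟩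
  | succ j ih =>
    intro hj
    have hjN : j ≤ N := by omega
    set k := N - (j + 1) with hk
    have he : N - j = k + 1 := by omega
    have u_eq : T^[k] (bk x N N) = bk x N (N - k) :=
      iterate_bk hT hx0 hxp hδ0 hδ N k (by omega)
    have w_eq : T^[k] (bk x (N + 1) (N + 1)) = bk x (N + 1) (N + 1 - k) :=
      iterate_bk hT hx0 hxp hδ0 hδ (N + 1) k (by omega)
    have mu : T^[k] (bk x N N) ∈ Icc ((brn x k : ℝ)) ((brn x k : ℝ) + 1) := by
      rw [u_eq]
      have h := (backward hT hx0 hxp hδ0 hδ N (N - k) (by omega)).1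
      have hNk : N - (N - k) = k := by omega
      rw [hNk] at h; exact h
    have mw : T^[k] (bk x (N + 1) (N + 1)) ∈ Icc ((brn x k : ℝ)) ((brn x k : ℝ) + 1) := by
      rw [w_eq]
      have h := (backward hT hx0 hxp hδ0 hδ (N + 1) (N + 1 - k) (by omega)).1
      have hNk : N + 1 - (N + 1 - k) = k := by omega
      rw [hNk] at h; exact h
    have hexp := T_expand hT (brn x k) mu mw
    have s1 : T (T^[k] (bk x N N)) = T^[N - j] (bk x N N) := by
      rw [he]; exact (Function.iterate_succ_apply' _ _ _).symm
    have s2 : T (T^[k] (bk x (N + 1) (N + 1))) = T^[N - j] (bk x (N + 1) (N + 1)) := by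
      rw [he]; exact (Function.iterate_succ_apply' _ _ _).symm
    rw [s1, s2] at hexp
    have hIH := ih hjN
    have h5 := five_le_Sreal (brn x k)
    have habs : 0 ≤ |T^[k] (bk x N N) - T^[k] (bk x (N + 1) (N + 1))| := abs_nonneg _
    have hpow : (1 / 5 : ℝ) ^ (j + 1) = (1 / 5 : ℝ) ^ j * (1 / 5) := pow_succ _ _
    have hkey : Sreal (brn x k) * |T^[k] (bk x N N) - T^[k] (bk x (N + 1) (N + 1))|
        ≤ (1 / 5 : ℝ) ^ j := hexp ▸ hIH
    nlinarith [hkey, habs, h5]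


/-- Shadowing property of `T`: for every `ε > 0` there exists `δ > 0` such that
every `δ`-pseudo orbit of `T` is `ε`-shadowed by a true orbit. -/
theorem shadowing_property (T : ℝ → ℝ) (hT : IsT T) :
    ∀ ε > (0 : ℝ), ∃ δ > (0 : ℝ), ∀ x : ℕ → ℝ, IsPseudoOrbit T δ x →
      ∃ y : ℝ, 0 ≤ y ∧ ∀ k : ℕ, |T^[k] y - x k| < ε := by
  intro ε hε
  refine ⟨min (ε / 3) (1 / 2), by positivity, ?_⟩
  intro x hx
  obtain ⟨hx0, hxp⟩ := hx
  set δ := min (ε / 3) (1 / 2) with hδdef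
  have hδ0 : 0 < δ := by positivity
  have hδh : δ ≤ 1 / 2 := min_le_right _ _
  have hδε : δ ≤ ε / 3 := min_le_left _ _
  set Y : ℕ → ℝ := fun N => bk x N N with hY
  -- Cauchy sequence
  have hcau : CauchySeq Y := by
    refine cauchySeq_of_le_geometric (1 / 5) 1 (by norm_num) fun N => ?_
    rw [Real.dist_eq]
    have := cauchy_est hT hx0 hxp hδ0 hδh N N le_rfl
    simpa using this
  obtain ⟨y, hy⟩ := cauchySeq_tendsto_of_complete hcau
  -- orbit membership and distance bounds for approximants
  have hYmem : ∀ k N, k ≤ N → T^[k] (Y N) ∈ Icc ((brn x k : ℝ)) ((brn x k : ℝ) + 1) := by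
    intro k N hkN
    have he : T^[k] (Y N) = bk x N (N - k) := iterate_bk hT hx0 hxp hδ0 hδh N k hkN
    rw [he]
    have h := (backward hT hx0 hxp hδ0 hδh N (N - k) (by omega)).1
    have hNk : N - (N - k) = k := by omega
    rw [hNk] at h; exact h
  have hYdist : ∀ k N, k ≤ N → |T^[k] (Y N) - x k| ≤ 11 * δ / 4 := by
    intro k N hkN
    have he : T^[k] (Y N) = bk x N (N - k) := iterate_bk hT hx0 hxp hδ0 hδh N k hkN
    have h1 := (backward hT hx0 hxp hδ0 hδh N (N - k) (by omega)).2.1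
    have hNk : N - (N - k) = k := by omega
    rw [hNk] at h1
    have h2 := (invariant hT hx0 hxp hδ0 hδh k).2.1
    calc |T^[k] (Y N) - x k| ≤ |T^[k] (Y N) - xrefl x k| + |xrefl x k - x k| :=
          abs_sub_le _ _ _
      _ ≤ 3 * δ / 4 + 2 * δ := by rw [he]; exact add_le_add h1 h2
      _ = 11 * δ / 4 := by ring
  -- the limit orbit
  have hiter : ∀ k, Tendsto (fun N => T^[k] (Y N)) atTop (nhds (T^[k] y)) ∧
      T^[k] y ∈ Icc ((brn x k : ℝ)) ((brn x k : ℝ) + 1) := by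
    intro k
    induction k with
    | zero =>
      refine ⟨by simpa using hy, ?_⟩
      have hev : ∀ᶠ N in atTop, Y N ∈ Icc ((brn x 0 : ℝ)) ((brn x 0 : ℝ) + 1) :=
        Eventually.of_forall fun N => by simpa using hYmem 0 N (Nat.zero_le N)
      simpa using isClosed_Icc.mem_of_tendsto hy hev
    | succ k ihk =>
      obtain ⟨ihT, ihm⟩ := ihk
      have hfc : Continuous (fun v : ℝ =>
          ((brn x k : ℝ) + 1 - v) * Tval (brn x k) + (v - (brn x k : ℝ)) * Tval (brn x k + 1)) := by
        fun_prop
      have h1 : Tendsto (fun N =>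
          ((brn x k : ℝ) + 1 - T^[k] (Y N)) * Tval (brn x k)
            + (T^[k] (Y N) - (brn x k : ℝ)) * Tval (brn x k + 1)) atTop
          (nhds (((brn x k : ℝ) + 1 - T^[k] y) * Tval (brn x k)
            + (T^[k] y - (brn x k : ℝ)) * Tval (brn x k + 1))) :=
        (hfc.tendsto _).comp ihT
      have h2 : (fun N =>
          ((brn x k : ℝ) + 1 - T^[k] (Y N)) * Tval (brn x k)
            + (T^[k] (Y N) - (brn x k : ℝ)) * Tval (brn x k + 1))
          =ᶠ[atTop] (fun N => T^[k + 1] (Y N)) := by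
        filter_upwards [eventually_ge_atTop k] with N hN
        rw [Function.iterate_succ_apply', hT (brn x k) _ (hYmem k N hN)]
      have h3 : ((brn x k : ℝ) + 1 - T^[k] y) * Tval (brn x k)
          + (T^[k] y - (brn x k : ℝ)) * Tval (brn x k + 1) = T^[k + 1] y := by
        rw [Function.iterate_succ_apply', hT (brn x k) _ ihm]
      have h4 : Tendsto (fun N => T^[k + 1] (Y N)) atTop (nhds (T^[k + 1] y)) := by
        rw [← h3]; exact h1.congr' h2
      refine ⟨h4, ?_⟩
      refine isClosed_Icc.mem_of_tendsto h4 ?_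
      filter_upwards [eventually_ge_atTop (k + 1)] with N hN
      exact hYmem (k + 1) N hN
  have hy0 : 0 ≤ y := by
    have := (hiter 0).2
    simp only [Function.iterate_zero_apply] at this
    exact le_trans (Nat.cast_nonneg _) this.1
  refine ⟨y, hy0, fun k => ?_⟩
  have htend : Tendsto (fun N => |T^[k] (Y N) - x k|) atTop (nhds (|T^[k] y - x k|)) :=
    ((hiter k).1.sub_const (x k)).abs
  have hle : |T^[k] y - x k| ≤ 11 * δ / 4 := by
    refine le_of_tendsto htend ?_
    filter_upwards [eventually_ge_atTop k] with N hN
    exact hYdist k N hN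
  have : 11 * δ / 4 < ε := by
    have : δ ≤ ε / 3 := hδε
    linarith
  linarith
end
end

section
/- Let 0 < δ < 1/4 and let (x_n)_{n∈ℕ} be a δ-pseudo orbit of T. For each n ∈ ℕ let j_n be the smallest positive integer with T(x_n) ∈ [j_n − 1, j_n]. Then j_{n+1} ≤ 4^{ℓ(j_n)} + 1 for all n ∈ ℕ; equivalently, [j_{n+1} − 1, j_{n+1}] ⊆ T([j_n − 1, j_n]) for all n. -/
open Set Filter

noncomputable section

lemma ell_mono {m n : ℕ} (h : m ≤ n) : ell m ≤ ell n :=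
  Nat.sInf_le ⟨(ell_mem n).1, h.trans (ell_mem n).2⟩

lemma ell_succ_le (n : ℕ) : ell (n + 1) ≤ ell n + 1 := by
  have h1 : (1:ℕ) ≤ 4 ^ ell n := Nat.one_le_pow _ _ (by norm_num)
  have h2 := (ell_mem n).2
  refine Nat.sInf_le ⟨by omega, ?_⟩
  have h3 : 4 ^ (ell n + 1) = 4 * 4 ^ ell n := by ring
  omega

lemma Tval_le {m J : ℕ} (h : m ≤ J) : Tval m ≤ 4 ^ ell J + 1 := by
  unfold Tval; split
  · positivity
  · have : (4:ℝ) ^ ell m ≤ 4 ^ ell J :=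
      pow_le_pow_right₀ (by norm_num) (ell_mono h)
    linarith

lemma T_nonneg (T : ℝ → ℝ) (hT : IsT T) {y : ℝ} (hy : 0 ≤ y) : 0 ≤ T y := by
  set N := ⌊y⌋₊ with hN
  have h1 : (N : ℝ) ≤ y := Nat.floor_le hy
  have h2 : y < N + 1 := Nat.lt_floor_add_one y
  rw [hT N y ⟨h1, h2.le⟩]
  have := Tval_nonneg N
  have := Tval_nonneg (N + 1)
  push_cast
  nlinarith

lemma T_bound (T : ℝ → ℝ) (hT : IsT T) (J : ℕ) (hJ : 1 ≤ J)
    {y : ℝ} (hy0 : 0 ≤ y) (hyJ : y < J + 1 / 4) :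
    T y ≤ 4 ^ ell J + 1 := by
  set N := ⌊y⌋₊ with hN
  have h1 : (N : ℝ) ≤ y := Nat.floor_le hy0
  have h2 : y < N + 1 := Nat.lt_floor_add_one y
  rw [hT N y ⟨h1, h2.le⟩]
  rcases lt_or_ge N J with hNJ | hNJ
  · -- N + 1 ≤ J : both Tval values bounded
    have hb1 : Tval N ≤ 4 ^ ell J + 1 := Tval_le (by omega)
    have hb2 : Tval (N + 1) ≤ 4 ^ ell J + 1 := Tval_le (by omega)
    have hp : (0:ℝ) < 4 ^ ell J + 1 := by positivity
    push_cast
    nlinarith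
  · -- N = J
    have hNJ' : N = J := by
      have : (N : ℝ) < J + 1 := lt_of_le_of_lt h1 (by linarith)
      have : N < J + 1 := by exact_mod_cast this
      omega
    subst hNJ'
    rcases Nat.even_or_odd N with he | ho
    · -- N even : Tval N = 0, small coefficient on Tval (N+1)
      have hTN : Tval N = 0 := if_pos he
      have hTN1 : Tval (N + 1) = 4 ^ ell (N + 1) + 1 := by
        rw [Tval, if_neg (by simp [Nat.even_add_one, he])]
      have hpow : (4:ℝ) ^ ell (N + 1) ≤ 4 * 4 ^ ell N := by
        calc (4:ℝ) ^ ell (N + 1) ≤ 4 ^ (ell N + 1) :=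
              pow_le_pow_right₀ (by norm_num) (ell_succ_le N)
          _ = 4 * 4 ^ ell N := by ring
      have hyc : y - N < 1 / 4 := by push_cast at hyJ ⊢; linarith
      have hp : (0:ℝ) < 4 ^ ell N := by positivity
      rw [hTN, hTN1]
      nlinarith [sub_nonneg.mpr h1]
    · -- N odd : Tval (N+1) = 0, coefficient on Tval N at most 1
      have hTN : Tval N = 4 ^ ell N + 1 := by
        rw [Tval, if_neg (Nat.not_even_iff_odd.mpr ho)]
      have hTN1 : Tval (N + 1) = 0 := if_pos (Nat.even_add_one.mpr (Nat.not_even_iff_odd.mpr ho))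
      have hp : (0:ℝ) < 4 ^ ell N + 1 := by positivity
      rw [hTN, hTN1]
      nlinarith [sub_nonneg.mpr h1]

/-- If `0 < δ < 1/4`, `(x n)` is a `δ`-pseudo orbit and `j n` is the smallest
positive integer with `T (x n) ∈ [j n - 1, j n]`, then `j (n+1) ≤ 4 ^ ℓ(j n) + 1`
for all `n`. -/
theorem itinerary_admissible (T : ℝ → ℝ) (hT : IsT T) (δ : ℝ)
    (hδ0 : 0 < δ) (hδ : δ < 1 / 4) (x : ℕ → ℝ) (hx : IsPseudoOrbit T δ x)
    (j : ℕ → ℕ)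
    (hj : ∀ n : ℕ, 1 ≤ j n ∧ T (x n) ∈ Set.Icc ((j n : ℝ) - 1) (j n) ∧
      ∀ m : ℕ, 1 ≤ m → T (x n) ∈ Set.Icc ((m : ℝ) - 1) m → j n ≤ m) :
    ∀ n : ℕ, j (n + 1) ≤ 4 ^ ell (j n) + 1 := by
  intro n
  obtain ⟨hx0, hxδ⟩ := hx
  obtain ⟨hj1, hjmem, _⟩ := hj n
  obtain ⟨_, _, hjmin⟩ := hj (n + 1)
  have habs := abs_lt.mp (hxδ n)
  have hxy : x (n + 1) < (j n : ℝ) + 1 / 4 := by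
    have hTx : T (x n) ≤ (j n : ℝ) := hjmem.2
    linarith [habs.2]
  have hy0 : 0 ≤ x (n + 1) := hx0 _
  have hbound : T (x (n + 1)) ≤ 4 ^ ell (j n) + 1 := T_bound T hT (j n) hj1 hy0 hxy
  have hTy0 : 0 ≤ T (x (n + 1)) := T_nonneg T hT hy0
  set c := ⌈T (x (n + 1))⌉₊ with hc
  set m := max 1 c with hm
  have h1m : 1 ≤ m := le_max_left _ _
  have hub : T (x (n + 1)) ≤ (m : ℝ) := by
    calc T (x (n + 1)) ≤ (c : ℝ) := Nat.le_ceil _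
      _ ≤ (m : ℝ) := by exact_mod_cast le_max_right 1 c
  have hlb : (m : ℝ) - 1 ≤ T (x (n + 1)) := by
    rcases le_total c 1 with h | h
    · have : m = 1 := by omega
      rw [this]; push_cast; linarith
    · have hmc : m = c := by omega
      have := Nat.ceil_lt_add_one hTy0
      rw [hmc]; linarith
  have hjle : j (n + 1) ≤ m := hjmin m h1m ⟨hlb, hub⟩
  have hmle : m ≤ 4 ^ ell (j n) + 1 := by
    have h1 : (1:ℕ) ≤ 4 ^ ell (j n) + 1 := Nat.le_add_left 1 _
    have h2 : c ≤ 4 ^ ell (j n) + 1 := by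
      rw [hc]
      refine Nat.ceil_le.mpr ?_
      push_cast
      exact hbound
    omega
  omega
end
end

section
/- Let δ > 0, let (x_k)_{k∈ℕ} be a δ-pseudo orbit of T, and let (i_k)_{k∈ℕ} be a sequence of positive integers such that x_k ∈ [i_k − 1, i_k] for all k and i_{k+1} ≤ 4^{ℓ(i_k)} + 1 for all k. Then for every y ∈ ⋂_{k=0}^∞ T^{−k}([i_k − 1, i_k]) one has |T^k(y) − x_k| ≤ δ/4 for all k ∈ ℕ. -/
open Set Filter

noncomputable section

lemma ell_ge_one (m : ℕ) : 1 ≤ ell m := by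
  have hne : {k : ℕ | 1 ≤ k ∧ m ≤ 4 ^ k}.Nonempty :=
    ⟨max 1 m, le_max_left _ _,
      le_trans (Nat.le_of_lt (Nat.lt_pow_self (by norm_num : 1 < 4) : m < 4 ^ m))
        (Nat.pow_le_pow_right (by norm_num) (le_max_right _ _))⟩
  exact (Nat.sInf_mem hne).1

lemma slope_ge (n : ℕ) : (5:ℝ) ≤ |Tval (n+1) - Tval n| := by
  have h4 : ∀ m : ℕ, (4:ℝ) ≤ 4 ^ ell m := by
    intro m
    calc (4:ℝ) = 4 ^ 1 := (pow_one 4).symm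
    _ ≤ 4 ^ ell m := pow_le_pow_right₀ (by norm_num) (ell_ge_one m)
  rcases Nat.even_or_odd n with he | ho
  · rw [Tval, Tval, if_pos he, if_neg (by simp [Nat.even_add_one, he])]
    have := h4 (n+1)
    rw [abs_of_nonneg (by linarith)]; linarith
  · have hne : ¬ Even n := Nat.not_even_iff_odd.mpr ho
    rw [Tval, Tval, if_neg hne, if_pos (by simp [Nat.even_add_one, hne])]
    have := h4 n
    rw [abs_of_nonpos (by linarith)]; linarith


/-- If `(x k)` is a `δ`-pseudo orbit with an admissible itinerary `(i k)`
(meaning `x k ∈ [i k - 1, i k]` and `i (k+1) ≤ 4 ^ ℓ(i k) + 1`), then every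
point `y` of `⋂ k, T^[k] ⁻¹' [i k - 1, i k]` satisfies
`|T^[k] y - x k| ≤ δ / 4` for all `k`. -/
theorem orbit_quarter_delta_shadows (T : ℝ → ℝ) (hT : IsT T) (δ : ℝ)
    (hδ0 : 0 < δ) (x : ℕ → ℝ) (hx : IsPseudoOrbit T δ x) (i : ℕ → ℕ)
    (hipos : ∀ k : ℕ, 1 ≤ i k)
    (hmem : ∀ k : ℕ, x k ∈ Set.Icc ((i k : ℝ) - 1) (i k))
    (hadm : ∀ k : ℕ, i (k + 1) ≤ 4 ^ ell (i k) + 1)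
    (y : ℝ) (hy : y ∈ ⋂ k : ℕ, T^[k] ⁻¹' Set.Icc ((i k : ℝ) - 1) (i k)) :
    ∀ k : ℕ, |T^[k] y - x k| ≤ δ / 4 := by
  have hyk : ∀ k, T^[k] y ∈ Set.Icc ((i k : ℝ) - 1) (i k) := fun k => Set.mem_iInter.mp hy k
  have hd1 : ∀ k, |T^[k] y - x k| ≤ 1 := by
    intro k
    have h1 := hyk k; have h2 := hmem k
    rw [abs_sub_le_iff]
    exact ⟨by linarith [h1.2, h2.1], by linarith [h1.1, h2.2]⟩
  have key : ∀ k, 5 * |T^[k] y - x k| - δ ≤ |T^[k+1] y - x (k+1)| := by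
    intro k
    set n := i k - 1 with hn
    have hcast : ((n:ℝ)) = (i k : ℝ) - 1 := by
      rw [hn, Nat.cast_sub (hipos k)]; norm_num
    have hcast2 : (n:ℝ) + 1 = (i k : ℝ) := by rw [hcast]; ring
    have hsucc : n + 1 = i k := Nat.succ_pred_eq_of_pos (hipos k)
    have hIcc : ∀ a : ℝ, a ∈ Set.Icc ((i k : ℝ) - 1) (i k) →
        a ∈ Set.Icc ((n:ℝ)) ((n:ℝ) + 1) := by
      intro a ha
      exact ⟨by rw [hcast]; exact ha.1, by rw [hcast2]; exact ha.2⟩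
    have hTa := hT n _ (hIcc _ (hyk k))
    have hTb := hT n _ (hIcc _ (hmem k))
    have hdiff : T (T^[k] y) - T (x k) = (T^[k] y - x k) * (Tval (n+1) - Tval n) := by
      rw [hTa, hTb]; ring
    have habs : |T (T^[k] y) - T (x k)| = |T^[k] y - x k| * |Tval (n+1) - Tval n| := by
      rw [hdiff, abs_mul]
    have h5 : 5 * |T^[k] y - x k| ≤ |T (T^[k] y) - T (x k)| := by
      rw [habs]
      have hs := slope_ge n
      nlinarith [abs_nonneg (T^[k] y - x k)]
    have hps := hx.2 k
    have htri : |T (T^[k] y) - T (x k)| ≤ |T (T^[k] y) - x (k+1)| + |x (k+1) - T (x k)| :=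
      abs_sub_le _ _ _
    rw [Function.iterate_succ_apply']
    linarith
  have grow : ∀ m k : ℕ, 5 ^ m * (|T^[k] y - x k| - δ / 4) ≤ 1 := by
    intro m
    induction m with
    | zero => intro k; simpa using by linarith [hd1 k]
    | succ m ih =>
      intro k
      have h1 : 5 * (|T^[k] y - x k| - δ / 4) ≤ |T^[k+1] y - x (k+1)| - δ / 4 := by
        linarith [key k]
      calc (5:ℝ) ^ (m+1) * (|T^[k] y - x k| - δ / 4)
          = 5 ^ m * (5 * (|T^[k] y - x k| - δ / 4)) := by ring
        _ ≤ 5 ^ m * (|T^[k+1] y - x (k+1)| - δ / 4) :=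
            mul_le_mul_of_nonneg_left h1 (by positivity)
        _ ≤ 1 := ih (k+1)
  intro k
  by_contra hcon
  push_neg at hcon
  set c : ℝ := |T^[k] y - x k| - δ / 4 with hc
  have hcpos : 0 < c := by simp only [hc]; linarith
  obtain ⟨m, hm⟩ := pow_unbounded_of_one_lt (1 / c) (by norm_num : (1:ℝ) < 5)
  have := grow m k
  rw [← hc] at this
  have : 1 / c < 5 ^ m := hm
  have h1 : 1 < 5 ^ m * c := by
    calc (1:ℝ) = (1/c) * c := by field_simp
    _ < 5 ^ m * c := by exact mul_lt_mul_of_pos_right hm hcpos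
  linarith [grow m k]
end
end

section
/- For every infinite sequence (i_k)_{k∈ℕ} of positive integers, the set ⋂_{k=0}^∞ T^{−k}([i_k − 1, i_k]) contains at most one point. -/
open Set Filter

noncomputable section

lemma Tval_odd_ge (n : ℕ) (h : ¬ Even n) : (5 : ℝ) ≤ Tval n := by
  have h1 := (ell_mem n).1
  have h2 : (4 : ℝ) ^ 1 ≤ 4 ^ ell n := pow_le_pow_right₀ (by norm_num) h1
  simp only [Tval, if_neg h]
  norm_num at h2 ⊢
  linarith

lemma Tval_diff (n : ℕ) : 5 ≤ |Tval (n + 1) - Tval n| := by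
  rcases Nat.even_or_odd n with h | h
  · have h1 : ¬ Even (n + 1) := by simp [Nat.even_add_one, h]
    have := Tval_odd_ge (n + 1) h1
    have hn : Tval n = 0 := by simp [Tval, h]
    rw [hn, sub_zero, abs_of_nonneg (by linarith)]
    linarith
  · have h0 : ¬ Even n := Nat.not_even_iff_odd.mpr h
    have h1 : Even (n + 1) := Nat.even_add_one.mpr h0
    have := Tval_odd_ge n h0
    have hn : Tval (n + 1) = 0 := by simp [Tval, h1]
    rw [hn, zero_sub, abs_neg, abs_of_nonneg (by linarith)]
    linarith

lemma expand (T : ℝ → ℝ) (hT : IsT T) (n : ℕ) {x y : ℝ}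
    (hx : x ∈ Set.Icc (n : ℝ) (n + 1)) (hy : y ∈ Set.Icc (n : ℝ) (n + 1)) :
    2 * |x - y| ≤ |T x - T y| := by
  have hd : T x - T y = (x - y) * (Tval (n + 1) - Tval n) := by
    rw [hT n x hx, hT n y hy]; ring
  have : |T x - T y| = |x - y| * |Tval (n + 1) - Tval n| := by
    rw [hd, abs_mul]
  rw [this]
  have h5 := Tval_diff n
  nlinarith [abs_nonneg (x - y)]

/-- For every infinite sequence of positive integers `(i k)`, the set
`⋂ k, T^{-k}([i k - 1, i k])` contains at most one point. -/
theorem cylinder_subsingleton (T : ℝ → ℝ) (hT : IsT T)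
    (i : ℕ → ℕ) (hi : ∀ k, 1 ≤ i k) :
    Set.Subsingleton (⋂ k : ℕ, T^[k] ⁻¹' Set.Icc ((i k : ℝ) - 1) (i k)) := by
  intro x hx y hy
  simp only [Set.mem_iInter, Set.mem_preimage] at hx hy
  have hmem : ∀ k, T^[k] x ∈ Set.Icc ((i k - 1 : ℕ) : ℝ) ((i k - 1 : ℕ) + 1)
      ∧ T^[k] y ∈ Set.Icc ((i k - 1 : ℕ) : ℝ) ((i k - 1 : ℕ) + 1) := by
    intro k
    have hc : ((i k - 1 : ℕ) : ℝ) = (i k : ℝ) - 1 := by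
      have := hi k
      push_cast [this]
      ring
    rw [hc]
    constructor
    · have := hx k; constructor <;> [exact this.1; linarith [this.2]]
    · have := hy k; constructor <;> [exact this.1; linarith [this.2]]
  have key : ∀ k, 2 ^ k * |x - y| ≤ |T^[k] x - T^[k] y| := by
    intro k
    induction k with
    | zero => simp
    | succ k ih =>
      rw [Function.iterate_succ_apply', Function.iterate_succ_apply']
      have h2 := expand T hT (i k - 1) (hmem k).1 (hmem k).2
      calc 2 ^ (k + 1) * |x - y| = 2 * (2 ^ k * |x - y|) := by ring
        _ ≤ 2 * |T^[k] x - T^[k] y| := by linarith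
        _ ≤ _ := h2
  have hbd : ∀ k, |x - y| ≤ (1 / 2 : ℝ) ^ k := by
    intro k
    have h1 : |T^[k] x - T^[k] y| ≤ 1 := by
      have a := hx k; have b := hy k
      rw [abs_le]
      constructor <;> [linarith [a.1, a.2, b.1, b.2]; linarith [a.1, a.2, b.1, b.2]]
    have h2 := (key k).trans h1
    have h3 : (0 : ℝ) < 2 ^ k := by positivity
    rw [one_div, inv_pow, ← one_div, le_div_iff₀ h3]
    linarith
  have h0 : |x - y| ≤ 0 :=
    ge_of_tendsto' (tendsto_pow_atTop_nhds_zero_of_lt_one (by norm_num) (by norm_num)) hbd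
  exact sub_eq_zero.mp (abs_eq_zero.mp (le_antisymm h0 (abs_nonneg _)))

end
end

section
/- Every non-exceptional x ∈ X whose orbit under f is eventually periodic is rational. -/
open Set Filter

noncomputable section

/-- `X` is the union of the integer intervals `[n-1, n]` for `n ∈ S`. -/
def UnionOfIntervals (S : Set ℤ) : Set ℝ :=
  ⋃ n ∈ S, Set.Icc ((n : ℝ) - 1) (n : ℝ)

/-- `f` is an integer-affine Markov-type map on `X = ⋃_{n ∈ S} [n-1, n]`: on the
interior of each integer interval of the partition it is given by
`x ↦ a • x + b` with integer coefficients and `|a| ≥ 2`. -/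
def IsPLSystem (S : Set ℤ) (f : ℝ → ℝ) : Prop :=
  S.Nonempty ∧ (∀ x ∈ UnionOfIntervals S, f x ∈ UnionOfIntervals S) ∧
    ∀ n ∈ S, ∃ a b : ℤ, 2 ≤ |a| ∧
      ∀ x ∈ Set.Ioo ((n : ℝ) - 1) (n : ℝ), f x = a * x + b

/-- `x` is non-exceptional: no iterate of `f` at `x` is an integer. -/
def NonExceptional (f : ℝ → ℝ) (x : ℝ) : Prop :=
  ∀ k : ℕ, ∀ m : ℤ, f^[k] x ≠ (m : ℝ)

/-- The orbit of `x` under `f` is eventually periodic. -/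
def EventuallyPeriodic (f : ℝ → ℝ) (x : ℝ) : Prop :=
  ∃ m p : ℕ, 1 ≤ p ∧ f^[m + p] x = f^[m] x

/-- Every non-exceptional point of `X` whose orbit under `f` is eventually
periodic is rational. -/
theorem eventually_periodic_is_rational (S : Set ℤ) (f : ℝ → ℝ)
    (hf : IsPLSystem S f) (x : ℝ) (hxX : x ∈ UnionOfIntervals S)
    (hnex : NonExceptional f x) (hper : EventuallyPeriodic f x) :
    ∃ r : ℚ, x = (r : ℝ) := by
  obtain ⟨hS, hmaps, hcoef⟩ := hf
  -- all iterates stay in X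
  have hiter : ∀ k : ℕ, f^[k] x ∈ UnionOfIntervals S := by
    intro k
    induction k with
    | zero => exact hxX
    | succ k ih =>
      rw [Function.iterate_succ_apply']
      exact hmaps _ ih
  -- each iterate lies in an open interval
  have hopen : ∀ k : ℕ, ∃ n ∈ S, f^[k] x ∈ Set.Ioo ((n : ℝ) - 1) (n : ℝ) := by
    intro k
    obtain ⟨n, hn, hmem⟩ := Set.mem_iUnion₂.mp (hiter k)
    refine ⟨n, hn, lt_of_le_of_ne hmem.1 ?_, lt_of_le_of_ne hmem.2 ?_⟩
    · intro h
      apply hnex k (n - 1)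
      push_cast
      exact h.symm
    · exact hnex k n
  -- affine relation between iterates
  have key : ∀ j k : ℕ, ∃ a b : ℤ, (2 : ℤ) ^ k ≤ |a| ∧
      f^[j + k] x = a * f^[j] x + b := by
    intro j k
    induction k with
    | zero => exact ⟨1, 0, by norm_num, by push_cast; ring⟩
    | succ k ih =>
      obtain ⟨a, b, ha, hab⟩ := ih
      obtain ⟨n, hn, hmem⟩ := hopen (j + k)
      obtain ⟨a', b', ha', hf'⟩ := hcoef n hn
      refine ⟨a' * a, a' * b + b', ?_, ?_⟩
      · rw [abs_mul, pow_succ']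
        exact mul_le_mul ha' ha (by positivity) (abs_nonneg _)
      · have : f^[j + (k + 1)] x = f (f^[j + k] x) := by
          rw [show j + (k + 1) = (j + k) + 1 by ring, Function.iterate_succ_apply']
        rw [this, hf' _ hmem, hab]
        push_cast
        ring
  obtain ⟨m, p, hp, hper⟩ := hper
  obtain ⟨A, B, hA, hAB⟩ := key m p
  obtain ⟨a, b, ha, hab⟩ := key 0 m
  have hA1 : A ≠ 1 := by
    intro h
    rw [h] at hA
    have : (2:ℤ) ≤ 2 ^ p := le_self_pow₀ (by norm_num) (by omega)
    simp at hA; omega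
  have ha0 : a ≠ 0 := by
    intro h
    rw [h, abs_zero] at ha
    exact absurd ha (pow_pos (two_pos : (0:ℤ) < 2) m).not_ge
  -- f^[m] x is rational
  rw [hper] at hAB
  have hfm : f^[m] x = ((-B : ℝ)) / (A - 1) := by
    have hAne : (A : ℝ) - 1 ≠ 0 := by
      intro h
      apply hA1
      have : (A : ℝ) = 1 := by linarith
      exact_mod_cast this
    field_simp
    linarith [hAB]
  simp only [Nat.zero_add, Function.iterate_zero_apply] at hab
  refine ⟨((-B : ℚ) / (A - 1) - b) / a, ?_⟩
  have haR : (a : ℝ) ≠ 0 := Int.cast_ne_zero.mpr ha0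
  have hAR : (A : ℝ) - 1 ≠ 0 := by
    intro h
    apply hA1
    have : (A : ℝ) = 1 := by linarith
    exact_mod_cast this
  have hAQ : (A : ℚ) - 1 ≠ 0 := by
    intro h
    apply hA1
    have : (A : ℚ) = 1 := by linarith
    exact_mod_cast this
  have hx : x = ((-B : ℝ) / (A - 1) - b) / a := by
    rw [← hfm, hab]
    field_simp
    ring
  rw [hx]
  push_cast
  ring
end
end

section
/- Let x = p/q ∈ X with p ∈ ℤ and q ∈ ℤ⁺ be non-exceptional and suppose the orbit of x under f is not eventually periodic. Then for every n ∈ ℤ⁺, the set {k ∈ ℕ : f^k(x) ∈ [−n, n]} has at most 4nq elements. -/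
open Set Filter

noncomputable section

/-- If `x = p / q ∈ X` (with `q ∈ ℤ⁺`) is non-exceptional and its orbit is not
eventually periodic, then for every `n ∈ ℤ⁺` the orbit visits `[-n, n]` at most
`4 n q` times. -/
theorem orbit_visits_bounded (S : Set ℤ) (f : ℝ → ℝ)
    (hf : IsPLSystem S f) (x : ℝ) (hxX : x ∈ UnionOfIntervals S)
    (p : ℤ) (q : ℕ) (hq : 1 ≤ q) (hxpq : x = (p : ℝ) / (q : ℝ))
    (hnex : NonExceptional f x) (hnper : ¬ EventuallyPeriodic f x) :
    ∀ n : ℕ, 1 ≤ n →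
      {k : ℕ | f^[k] x ∈ Set.Icc (-(n : ℝ)) (n : ℝ)}.Finite ∧
        {k : ℕ | f^[k] x ∈ Set.Icc (-(n : ℝ)) (n : ℝ)}.ncard ≤ 4 * n * q := by
  obtain ⟨hS, hmap, haff⟩ := hf
  have hq0 : (0:ℝ) < q := by exact_mod_cast hq
  have hX : ∀ k, f^[k] x ∈ UnionOfIntervals S := by
    intro k
    induction k with
    | zero => simpa using hxX
    | succ k ih => rw [Function.iterate_succ_apply']; exact hmap _ ih
  have hden : ∀ k, ∃ m : ℤ, f^[k] x = (m : ℝ) / q := by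
    intro k
    induction k with
    | zero => exact ⟨p, by simpa using hxpq⟩
    | succ k ih =>
      obtain ⟨m, hm⟩ := ih
      have hy := hX k
      simp only [UnionOfIntervals, mem_iUnion] at hy
      obtain ⟨n, hnS, hyI⟩ := hy
      obtain ⟨a, b, ha, hab⟩ := haff n hnS
      have h1 : f^[k] x ≠ (n:ℝ) := hnex k n
      have h2 : f^[k] x ≠ (n:ℝ) - 1 := by
        have := hnex k (n-1); push_cast at this; exact this
      have hIoo : f^[k] x ∈ Set.Ioo ((n:ℝ)-1) (n:ℝ) :=
        ⟨lt_of_le_of_ne hyI.1 (Ne.symm h2), lt_of_le_of_ne hyI.2 h1⟩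
      refine ⟨a * m + b * q, ?_⟩
      rw [Function.iterate_succ_apply', hab _ hIoo, hm]
      push_cast
      field_simp
  have hinj : ∀ k j : ℕ, f^[k] x = f^[j] x → k = j := by
    intro k j hkj
    by_contra hne
    apply hnper
    rcases Nat.lt_or_ge k j with h | h
    · exact ⟨k, j - k, by omega, by rw [show k + (j-k) = j by omega]; exact hkj.symm⟩
    · exact ⟨j, k - j, by omega, by rw [show j + (k-j) = k by omega]; exact hkj⟩
  intro n hn
  set A := {k : ℕ | f^[k] x ∈ Set.Icc (-(n : ℝ)) (n : ℝ)} with hA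
  set g : ℕ → ℤ := fun k => Classical.choose (hden k) with hg
  have hgspec : ∀ k, f^[k] x = (g k : ℝ) / q := fun k => Classical.choose_spec (hden k)
  have hginj : Set.InjOn g A := by
    intro k _ j _ h
    apply hinj
    rw [hgspec k, hgspec j, h]
  have himg : g '' A ⊆ ↑(Finset.Icc (-((n * q : ℕ) : ℤ)) ((n * q : ℕ) : ℤ)) := by
    rintro _ ⟨k, hk, rfl⟩
    simp only [Finset.coe_Icc, Set.mem_Icc]
    have hk' : -(n:ℝ) ≤ (g k : ℝ)/q ∧ (g k : ℝ)/q ≤ n := by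
      have := hk; rw [hA, Set.mem_setOf_eq, hgspec k, Set.mem_Icc] at this; exact this
    constructor
    · have h1 : (-(n:ℝ)) * q ≤ (g k : ℝ) := (le_div_iff₀ hq0).mp hk'.1
      have : (-(((n*q : ℕ) : ℤ)) : ℝ) ≤ (g k : ℝ) := by push_cast; linarith
      exact_mod_cast this
    · have h1 : (g k : ℝ) ≤ (n:ℝ) * q := (div_le_iff₀ hq0).mp hk'.2
      have : (g k : ℝ) ≤ (((n*q : ℕ) : ℤ) : ℝ) := by push_cast; linarith
      exact_mod_cast this
  have hfinT : (↑(Finset.Icc (-((n * q : ℕ) : ℤ)) ((n * q : ℕ) : ℤ)) : Set ℤ).Finite :=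
    Finset.finite_toSet _
  have hfinImg : (g '' A).Finite := hfinT.subset himg
  have hAfin : A.Finite := Set.Finite.of_finite_image hfinImg hginj
  refine ⟨hAfin, ?_⟩
  have hcard : (Finset.Icc (-((n * q : ℕ) : ℤ)) ((n * q : ℕ) : ℤ)).card = 2 * (n * q) + 1 := by
    rw [Int.card_Icc]; omega
  have hm1 : 1 ≤ n * q := Nat.one_le_iff_ne_zero.mpr (by positivity)
  calc A.ncard = (g '' A).ncard := (Set.ncard_image_of_injOn hginj).symm
    _ ≤ (↑(Finset.Icc (-((n * q : ℕ) : ℤ)) ((n * q : ℕ) : ℤ)) : Set ℤ).ncard :=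
        Set.ncard_le_ncard himg hfinT
    _ = 2 * (n * q) + 1 := by rw [Set.ncard_coe_finset, hcard]
    _ ≤ 4 * n * q := by
        have h4 : 4 * n * q = 4 * (n * q) := by ring
        omega
end
end

section
/- Suppose the bottleneck condition holds: liminf_{N→∞} sup{ λ({x ∈ [n−1, n] ∩ X : f(x) ≤ −N or f(x) ≥ N}) : n ∈ S, 1−N ≤ n ≤ N } = 0 (with the supremum over the empty set taken to be 0). Then every non-exceptional rational x ∈ X has an eventually periodic orbit under f. -/
open Set Filter

noncomputable section

/-- The bottleneck condition: the liminf, as `N → ∞`, of the largest measure of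
the set of points of an integer interval `[n-1, n]` of the partition with
`1 - N ≤ n ≤ N` that `f` maps outside `(-N, N)`, is zero. -/
def BottleneckCondition (S : Set ℤ) (f : ℝ → ℝ) : Prop :=
  Filter.liminf (fun N : ℕ =>
    ⨆ n ∈ {n : ℤ | n ∈ S ∧ 1 - (N : ℤ) ≤ n ∧ n ≤ (N : ℤ)},
      MeasureTheory.volume {x : ℝ | x ∈ Set.Icc ((n : ℝ) - 1) (n : ℝ) ∧
        x ∈ UnionOfIntervals S ∧ (f x ≤ -(N : ℝ) ∨ (N : ℝ) ≤ f x)})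
    Filter.atTop = 0

/-- Gap lemma: a non-integer rational with denominator dividing `d` is at
distance at least `1/d` from every integer. -/
lemma denom_gap {y : ℝ} {d : ℕ} (hd : 0 < d) {z : ℤ} (hz : y * d = z)
    (m : ℤ) (hym : y ≠ (m : ℝ)) : (d : ℝ)⁻¹ ≤ |y - m| := by
  have hd' : (0 : ℝ) < d := by exact_mod_cast hd
  have hne : z - m * d ≠ 0 := by
    intro h
    apply hym
    have : (z : ℝ) = m * d := by exact_mod_cast sub_eq_zero.mp h
    have h' : y = m := mul_right_cancel₀ (ne_of_gt hd') (hz.trans this)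
    nlinarith [this, hz]
  have h1 : (1 : ℝ) ≤ |(z : ℝ) - m * d| := by
    have : (1 : ℤ) ≤ |z - m * d| := Int.one_le_abs hne
    calc (1:ℝ) = ((1:ℤ):ℝ) := by norm_num
    _ ≤ ((|z - m*d| : ℤ) : ℝ) := by exact_mod_cast this
    _ = |(z:ℝ) - m*d| := by push_cast [Int.cast_abs]; ring_nf
  have key : |y - m| * d = |(z : ℝ) - m * d| := by
    rw [← abs_of_pos hd', ← abs_mul]
    congr 1
    rw [sub_mul, hz, abs_of_pos hd']
  have h5 : (1:ℝ) ≤ |y - m| * d := by rw [key]; exact h1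
  have h6 : (d:ℝ)⁻¹ * d = 1 := inv_mul_cancel₀ (ne_of_gt hd')
  nlinarith [abs_nonneg (y - (m:ℝ))]

/-- Escape-measure lemma: if a point of denominator dividing `d` in `(n-1,n)`
escapes beyond `±N`, then a whole subinterval of length `≥ 1/d` escapes. -/
lemma escape_measure {S : Set ℤ} {f : ℝ → ℝ} {n : ℤ} (hn : n ∈ S)
    {d : ℕ} (hd : 0 < d) {y : ℝ} (hy : y ∈ Set.Ioo ((n : ℝ) - 1) (n : ℝ))
    {z : ℤ} (hz : y * d = z) {N : ℝ}
    (hesc : f y ≤ -N ∨ N ≤ f y) {a b : ℤ} (ha : a ≠ 0)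
    (hab : ∀ x ∈ Set.Ioo ((n : ℝ) - 1) (n : ℝ), f x = a * x + b) :
    ((d : ENNReal))⁻¹ ≤ MeasureTheory.volume
      {x : ℝ | x ∈ Set.Icc ((n : ℝ) - 1) (n : ℝ) ∧
        x ∈ UnionOfIntervals S ∧ (f x ≤ -N ∨ N ≤ f x)} := by
  obtain ⟨hy1, hy2⟩ := hy
  have hIccX : Set.Icc ((n : ℝ) - 1) (n : ℝ) ⊆ UnionOfIntervals S := by
    intro t ht
    exact Set.mem_biUnion hn ht
  -- distances to the endpoints
  have hgap_n : (d : ℝ)⁻¹ ≤ (n : ℝ) - y := by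
    have := denom_gap hd hz n (ne_of_lt hy2)
    rwa [abs_sub_comm, abs_of_pos (by linarith)] at this
  have hgap_n1 : (d : ℝ)⁻¹ ≤ y - ((n : ℝ) - 1) := by
    have h' : y ≠ ((n - 1 : ℤ) : ℝ) := by push_cast; intro h; rw [h] at hy1; linarith
    have := denom_gap hd hz (n - 1) h'
    rw [abs_of_pos (by push_cast; push_cast at this ⊢; linarith [hy1])] at this
    push_cast at this ⊢
    linarith
  have hfy : f y = a * y + b := hab y ⟨hy1, hy2⟩
  -- choose the escaping subinterval J
  set P := {x : ℝ | x ∈ Set.Icc ((n : ℝ) - 1) (n : ℝ) ∧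
      x ∈ UnionOfIntervals S ∧ (f x ≤ -N ∨ N ≤ f x)} with hP
  have key : ∃ J : Set ℝ, J ⊆ P ∧ ((d : ENNReal))⁻¹ ≤ MeasureTheory.volume J := by
    have hvol_ico : MeasureTheory.volume (Set.Ico y (n : ℝ)) = ENNReal.ofReal ((n : ℝ) - y) :=
      Real.volume_Ico
    have hvol_ioc : MeasureTheory.volume (Set.Ioc ((n : ℝ) - 1) y)
        = ENNReal.ofReal (y - ((n : ℝ) - 1)) := Real.volume_Ioc
    have hdinv : ((d : ENNReal))⁻¹ = ENNReal.ofReal ((d : ℝ)⁻¹) := by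
      rw [ENNReal.ofReal_inv_of_pos (by exact_mod_cast hd)]
      congr 1
      simp [ENNReal.ofReal_natCast]
    have hIcoP : (∀ x ∈ Set.Ico y (n:ℝ), (f x ≤ -N ∨ N ≤ f x)) →
        Set.Ico y (n:ℝ) ⊆ P := by
      intro h x hx
      have hxIoo : x ∈ Set.Ioo ((n:ℝ) - 1) (n:ℝ) := ⟨lt_of_lt_of_le hy1 hx.1, hx.2⟩
      exact ⟨⟨le_of_lt hxIoo.1, le_of_lt hxIoo.2⟩, hIccX ⟨le_of_lt hxIoo.1, le_of_lt hxIoo.2⟩, h x hx⟩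
    have hIocP : (∀ x ∈ Set.Ioc ((n:ℝ) - 1) y, (f x ≤ -N ∨ N ≤ f x)) →
        Set.Ioc ((n:ℝ) - 1) y ⊆ P := by
      intro h x hx
      have hxIoo : x ∈ Set.Ioo ((n:ℝ) - 1) (n:ℝ) := ⟨hx.1, lt_of_le_of_lt hx.2 hy2⟩
      exact ⟨⟨le_of_lt hxIoo.1, le_of_lt hxIoo.2⟩, hIccX ⟨le_of_lt hxIoo.1, le_of_lt hxIoo.2⟩, h x hx⟩
    have hIcoVol : ((d : ENNReal))⁻¹ ≤ MeasureTheory.volume (Set.Ico y (n:ℝ)) := by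
      rw [hvol_ico, hdinv]; exact ENNReal.ofReal_le_ofReal hgap_n
    have hIocVol : ((d : ENNReal))⁻¹ ≤ MeasureTheory.volume (Set.Ioc ((n:ℝ) - 1) y) := by
      rw [hvol_ioc, hdinv]; exact ENNReal.ofReal_le_ofReal hgap_n1
    rcases ha.lt_or_gt with haneg | hapos
    · have haneg' : (a : ℝ) < 0 := by exact_mod_cast haneg
      rcases hesc with h1 | h2
      · -- a < 0, f y ≤ -N : on [y, n) values decrease below f y
        refine ⟨Set.Ico y (n:ℝ), hIcoP ?_, hIcoVol⟩
        intro t ht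
        left
        have htIoo : t ∈ Set.Ioo ((n:ℝ) - 1) (n:ℝ) := ⟨lt_of_lt_of_le hy1 ht.1, ht.2⟩
        rw [hab t htIoo]
        nlinarith [ht.1, hfy]
      · -- a < 0, N ≤ f y : on (n-1, y] values increase above f y
        refine ⟨Set.Ioc ((n:ℝ) - 1) y, hIocP ?_, hIocVol⟩
        intro t ht
        right
        have htIoo : t ∈ Set.Ioo ((n:ℝ) - 1) (n:ℝ) := ⟨ht.1, lt_of_le_of_lt ht.2 hy2⟩
        rw [hab t htIoo]
        nlinarith [ht.2, hfy]
    · have hapos' : (0 : ℝ) < a := by exact_mod_cast hapos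
      rcases hesc with h1 | h2
      · -- a > 0, f y ≤ -N : on (n-1, y]
        refine ⟨Set.Ioc ((n:ℝ) - 1) y, hIocP ?_, hIocVol⟩
        intro t ht
        left
        have htIoo : t ∈ Set.Ioo ((n:ℝ) - 1) (n:ℝ) := ⟨ht.1, lt_of_le_of_lt ht.2 hy2⟩
        rw [hab t htIoo]
        nlinarith [ht.2, hfy]
      · -- a > 0, N ≤ f y : on [y, n)
        refine ⟨Set.Ico y (n:ℝ), hIcoP ?_, hIcoVol⟩
        intro t ht
        right
        have htIoo : t ∈ Set.Ioo ((n:ℝ) - 1) (n:ℝ) := ⟨lt_of_lt_of_le hy1 ht.1, ht.2⟩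
        rw [hab t htIoo]
        nlinarith [ht.1, hfy]
  obtain ⟨J, hJP, hJvol⟩ := key
  exact le_trans hJvol (MeasureTheory.measure_mono hJP)

/-- If the bottleneck condition holds, then every non-exceptional rational
point of `X` has an eventually periodic orbit under `f`. -/
theorem bottleneck_implies_rationals_eventually_periodic (S : Set ℤ)
    (f : ℝ → ℝ) (hf : IsPLSystem S f) (hbot : BottleneckCondition S f)
    (x : ℝ) (hxX : x ∈ UnionOfIntervals S) (hnex : NonExceptional f x)
    (hrat : ∃ r : ℚ, x = (r : ℝ)) :
    EventuallyPeriodic f x := by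
  obtain ⟨hS, hinv, haff⟩ := hf
  obtain ⟨r, rfl⟩ := hrat
  set d : ℕ := r.den with hd_def
  have hd : 0 < d := r.pos
  have hd' : (0 : ℝ) < d := by exact_mod_cast hd
  -- the bottleneck supremum function
  set G : ℕ → ENNReal := fun N =>
    ⨆ n ∈ {n : ℤ | n ∈ S ∧ 1 - (N : ℤ) ≤ n ∧ n ≤ (N : ℤ)},
      MeasureTheory.volume {x : ℝ | x ∈ Set.Icc ((n : ℝ) - 1) (n : ℝ) ∧
        x ∈ UnionOfIntervals S ∧ (f x ≤ -(N : ℝ) ∨ (N : ℝ) ≤ f x)} with hG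
  have hliminf : Filter.liminf G Filter.atTop = 0 := hbot
  have hεpos : (0 : ENNReal) < ((d : ENNReal))⁻¹ := by
    simp [ENNReal.inv_pos]
  have hfreq : ∃ᶠ N in Filter.atTop, G N < ((d : ENNReal))⁻¹ := by
    exact Filter.frequently_lt_of_liminf_lt Filter.isCobounded_ge_of_top
      (by rw [hliminf]; exact hεpos)
  obtain ⟨N, hNge, hGN⟩ := Filter.frequently_atTop.mp hfreq (⌈|(r : ℝ)|⌉₊ + 1)
  have hxN : |(r : ℝ)| < N := by
    calc |(r : ℝ)| ≤ (⌈|(r : ℝ)|⌉₊ : ℝ) := Nat.le_ceil _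
    _ < ((⌈|(r : ℝ)|⌉₊ + 1 : ℕ) : ℝ) := by push_cast; linarith
    _ ≤ N := by exact_mod_cast hNge
  -- main invariant
  have hinvariant : ∀ k : ℕ, f^[k] (r : ℝ) ∈ UnionOfIntervals S ∧
      (∃ z : ℤ, f^[k] (r : ℝ) * d = z) ∧ |f^[k] (r : ℝ)| < N := by
    intro k
    induction k with
    | zero =>
      refine ⟨hxX, ⟨r.num, ?_⟩, by simpa using hxN⟩
      simp only [Function.iterate_zero_apply]
      exact_mod_cast congrArg (fun q : ℚ => (q : ℝ)) (Rat.mul_den_eq_num r)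
    | succ k ih =>
      obtain ⟨hyX, ⟨z, hz⟩, hyN⟩ := ih
      set y := f^[k] (r : ℝ) with hy_def
      -- y lies in some open interval (n-1, n), n ∈ S
      obtain ⟨n, hn, hyIcc⟩ := Set.mem_iUnion₂.mp hyX
      have hyn : y ≠ (n : ℝ) := hnex k n
      have hyn1 : y ≠ ((n : ℝ) - 1) := by
        have := hnex k (n - 1)
        push_cast at this
        exact this
      have hyIoo : y ∈ Set.Ioo ((n : ℝ) - 1) (n : ℝ) :=
        ⟨lt_of_le_of_ne hyIcc.1 (Ne.symm hyn1), lt_of_le_of_ne hyIcc.2 hyn⟩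
      obtain ⟨a, b, ha2, hab⟩ := haff n hn
      have ha : a ≠ 0 := by
        intro h; rw [h] at ha2; simp at ha2
      have hfy : f y = a * y + b := hab y hyIoo
      have hstep : f^[k + 1] (r : ℝ) = f y := by
        rw [Function.iterate_succ_apply']
      constructor
      · rw [hstep]; exact hinv y hyX
      constructor
      · refine ⟨a * z + b * d, ?_⟩
        rw [hstep, hfy]
        push_cast
        linear_combination (a : ℝ) * hz
      · -- boundedness via the bottleneck
        rw [hstep]
        by_contra hcon
        push_neg at hcon
        have hesc : f y ≤ -(N : ℝ) ∨ (N : ℝ) ≤ f y := by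
          rcases le_abs.mp hcon with h | h
          · right; exact h
          · left; linarith
        have hmem : n ∈ {n : ℤ | n ∈ S ∧ 1 - (N : ℤ) ≤ n ∧ n ≤ (N : ℤ)} := by
          refine ⟨hn, ?_, ?_⟩
          · have hy1 : -(N : ℝ) < y := (abs_lt.mp hyN).1
            have hy2 : -(N : ℝ) < (n : ℝ) := lt_trans hy1 hyIoo.2
            have hzint : -((N : ℤ)) < n := by exact_mod_cast hy2
            omega
          · have hy1 : y < (N : ℝ) := (abs_lt.mp hyN).2
            have h2 : (n : ℝ) - 1 < (N : ℝ) := lt_trans hyIoo.1 hy1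
            have hzint : (n : ℤ) - 1 < (N : ℤ) := by exact_mod_cast h2
            omega
        have hvol := escape_measure hn hd hyIoo hz hesc ha hab
        have hle : MeasureTheory.volume {x : ℝ | x ∈ Set.Icc ((n : ℝ) - 1) (n : ℝ) ∧
            x ∈ UnionOfIntervals S ∧ (f x ≤ -(N : ℝ) ∨ (N : ℝ) ≤ f x)} ≤ G N := by
          simp only [hG]
          exact le_biSup (fun m : ℤ => MeasureTheory.volume
            {x : ℝ | x ∈ Set.Icc ((m : ℝ) - 1) (m : ℝ) ∧
              x ∈ UnionOfIntervals S ∧ (f x ≤ -(N : ℝ) ∨ (N : ℝ) ≤ f x)}) hmem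
        exact absurd (lt_of_le_of_lt (le_trans hvol hle) hGN) (lt_irrefl _)
  -- pigeonhole
  choose z hz using fun k => (hinvariant k).2.1
  have hzbound : ∀ k, z k ∈ Finset.Icc (-(N * d : ℤ)) (N * d : ℤ) := by
    intro k
    have h1 : |f^[k] (r : ℝ)| < N := (hinvariant k).2.2
    have h2 : f^[k] (r : ℝ) * d = z k := hz k
    have h3 : |(z k : ℝ)| ≤ (N : ℝ) * d := by
      rw [← h2, abs_mul, abs_of_pos hd']
      have : |f^[k] (r:ℝ)| * d ≤ N * d := by nlinarith
      linarith
    have h4 : |z k| ≤ (N * d : ℤ) := by exact_mod_cast h3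
    simp [Finset.mem_Icc, abs_le] at h4 ⊢
    exact ⟨h4.1, h4.2⟩
  let φ : ℕ → (Finset.Icc (-(N * d : ℤ)) (N * d : ℤ) : Finset ℤ) :=
    fun k => ⟨z k, hzbound k⟩
  obtain ⟨i, j, hij, hφ⟩ := Finite.exists_ne_map_eq_of_infinite φ
  have hzeq : z i = z j := by simpa [φ, Subtype.ext_iff] using hφ
  have heq : f^[i] (r : ℝ) = f^[j] (r : ℝ) := by
    have h1 := hz i
    have h2 := hz j
    rw [hzeq] at h1
    have := h1.trans h2.symm
    exact mul_right_cancel₀ (ne_of_gt hd') this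
  rcases hij.lt_or_gt with hlt | hlt
  · exact ⟨i, j - i, by omega, by rw [show i + (j - i) = j by omega]; exact heq.symm⟩
  · exact ⟨j, i - j, by omega, by rw [show j + (i - j) = i by omega]; exact heq⟩
end
end

section
/- Let a_0 ∈ ℤ, let (b_i)_{i≥1} be a sequence of integers with b_i ≥ 2, and let (a_i)_{i≥1} be a sequence of integers with 0 ≤ a_i ≤ b_i − 1 for all i. Set x = a_0 + Σ_{i=1}^∞ a_i/(b_1·b_2⋯b_i). If a_i < b_i − 1 for infinitely many i, and there exists a strictly increasing sequence (i_n) of indices such that a_{i_n}/b_{i_n} → 1 as n → ∞, then x is irrational. -/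
open Filter

noncomputable section

/-- Oppenheim's criterion: a Cantor series
`x = a₀ + ∑_{i≥1} a_i / (b₁ ⋯ b_i)` with integer digits `0 ≤ a_i ≤ b_i - 1` and
integer bases `b_i ≥ 2` is irrational provided that `a_i < b_i - 1` infinitely
often and `a_{iₙ} / b_{iₙ} → 1` along some strictly increasing sequence of
indices `(iₙ)`. -/
theorem cantor_series_irrational_of_ratio_tendsto_one
    (a b : ℕ → ℤ)
    (hb : ∀ i : ℕ, 1 ≤ i → 2 ≤ b i)
    (ha : ∀ i : ℕ, 1 ≤ i → 0 ≤ a i ∧ a i ≤ b i - 1)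
    (x : ℝ)
    (hx : x = (a 0 : ℝ) +
      ∑' i : ℕ, (a (i + 1) : ℝ) / ∏ j ∈ Finset.Icc 1 (i + 1), (b j : ℝ))
    (hinf : {i : ℕ | 1 ≤ i ∧ a i < b i - 1}.Infinite)
    (idx : ℕ → ℕ) (hidx1 : ∀ n : ℕ, 1 ≤ idx n) (hmono : StrictMono idx)
    (hlim : Filter.Tendsto (fun n : ℕ => (a (idx n) : ℝ) / (b (idx n) : ℝ))
      Filter.atTop (nhds 1)) :
    Irrational x := by
  -- setup
  set P : ℕ → ℝ := fun n => ∏ j ∈ Finset.Icc 1 n, (b j : ℝ) with hP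
  have hPge : ∀ n, (2 : ℝ) ^ n ≤ P n := by
    intro n
    have : (2 : ℝ) ^ n = ∏ j ∈ Finset.Icc 1 n, (2 : ℝ) := by
      rw [Finset.prod_const, Nat.card_Icc]; norm_num
    rw [this]
    refine Finset.prod_le_prod (fun j _ => by norm_num) (fun j hj => ?_)
    have := hb j (Finset.mem_Icc.mp hj).1
    exact_mod_cast this
  have hPpos : ∀ n, 0 < P n := fun n =>
    lt_of_lt_of_le (by positivity) (hPge n)
  have hPsucc : ∀ n, P (n + 1) = P n * (b (n + 1) : ℝ) := by
    intro n
    simp only [hP]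
    rw [Finset.prod_Icc_succ_top (Nat.le_add_left 1 n)]
  set f : ℕ → ℝ := fun i => (a (i + 1) : ℝ) / P (i + 1) with hf
  set g : ℕ → ℝ := fun i => ((b (i + 1) : ℝ) - 1) / P (i + 1) with hg
  have hf0 : ∀ i, 0 ≤ f i := by
    intro i
    have := (ha (i + 1) (Nat.le_add_left 1 i)).1
    have : (0 : ℝ) ≤ (a (i + 1) : ℝ) := by exact_mod_cast this
    exact div_nonneg this (hPpos _).le
  have hfg : ∀ i, f i ≤ g i := by
    intro i
    have h1 := (ha (i + 1) (Nat.le_add_left 1 i)).2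
    have h1' : (a (i + 1) : ℝ) ≤ (b (i + 1) : ℝ) - 1 := by
      have : (a (i + 1) : ℝ) ≤ ((b (i + 1) - 1 : ℤ) : ℝ) := by exact_mod_cast h1
      simpa using this
    exact (div_le_div_iff_of_pos_right (hPpos _)).mpr h1'
  have hgtel : ∀ i, g i = 1 / P i - 1 / P (i + 1) := by
    intro i
    have hb2 : (2 : ℝ) ≤ (b (i + 1) : ℝ) := by exact_mod_cast hb (i + 1) (Nat.le_add_left 1 i)
    have hbne : (b (i + 1) : ℝ) ≠ 0 := by linarith
    have hPne : P i ≠ 0 := (hPpos i).ne'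
    rw [hg]
    simp only [hPsucc i]
    field_simp
  -- tendsto of 1/P to 0
  have hPtop : Tendsto P atTop atTop := by
    refine tendsto_atTop_mono hPge ?_
    exact tendsto_pow_atTop_atTop_of_one_lt (by norm_num)
  have hg_sum : ∀ n, HasSum (fun i => g (n + i)) (1 / P n) := by
    intro n
    have h0 : ∀ i, 0 ≤ g (n + i) := fun i => (hf0 (n + i)).trans (hfg (n + i))
    rw [hasSum_iff_tendsto_nat_of_nonneg h0]
    have hps : ∀ m, ∑ i ∈ Finset.range m, g (n + i) = 1 / P n - 1 / P (n + m) := by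
      intro m
      have : ∀ i ∈ Finset.range m, g (n + i) =
          (fun k => 1 / P (n + k)) i - (fun k => 1 / P (n + k)) (i + 1) := by
        intro i _
        exact hgtel (n + i)
      rw [Finset.sum_congr rfl this, Finset.sum_range_sub']
      simp
    simp only [hps]
    have hcomp : Tendsto (fun m => P (n + m)) atTop atTop := by
      have := hPtop.comp (tendsto_add_atTop_nat n)
      simpa [Function.comp_def, Nat.add_comm] using this
    have : Tendsto (fun m => 1 / P (n + m)) atTop (nhds 0) := by
      simpa [one_div, Pi.inv_def] using hcomp.inv_tendsto_atTop
    simpa using tendsto_const_nhds.sub this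
  have hg_summable : Summable g := by
    have := (hg_sum 0).summable
    simpa using this
  have hf_summable : Summable f := Summable.of_nonneg_of_le hf0 hfg hg_summable
  -- tail sums
  set T : ℕ → ℝ := fun n => ∑' i, f (n + i) with hT
  have hT_lt : ∀ n, T n < 1 / P n := by
    intro n
    obtain ⟨k, hk, hnk⟩ := hinf.exists_gt n
    obtain ⟨hk1, hka⟩ := hk
    have hkn : n + (k - 1 - n) + 1 = k := by omega
    have hstrict : f (n + (k - 1 - n)) < g (n + (k - 1 - n)) := by
      simp only [hf, hg, hkn]
      refine (div_lt_div_iff_of_pos_right (hPpos k)).mpr ?_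
      have : ((a k : ℝ)) < ((b k : ℝ)) - 1 := by
        have : (a k : ℝ) < ((b k - 1 : ℤ) : ℝ) := by exact_mod_cast hka
        simpa using this
      exact this
    calc T n < ∑' i, g (n + i) :=
          Summable.tsum_lt_tsum_of_nonneg (fun i => hf0 (n + i)) (fun i => hfg (n + i)) hstrict
            ((hg_sum n).summable)
      _ = 1 / P n := (hg_sum n).tsum_eq
  have hftail : ∀ n, Summable (fun i => f (n + i)) := by
    intro n
    have := (summable_nat_add_iff n).mpr hf_summable
    refine this.congr fun i => ?_
    rw [Nat.add_comm]
  have hT0 : ∀ n, 0 ≤ T n := fun n => tsum_nonneg fun i => hf0 _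
  have hT_ge : ∀ n, f n ≤ T n := by
    intro n
    have := Summable.le_tsum (hftail n) 0 fun i _ => hf0 _
    simpa using this
  have hTsw : ∀ n, T n = ∑' i, f (i + n) := by
    intro n
    simp only [hT]
    exact tsum_congr fun i => by rw [Nat.add_comm]
  have hx_dec : ∀ n, x = (a 0 : ℝ) + (∑ i ∈ Finset.range n, f i + T n) := by
    intro n
    rw [hx, hTsw n, Summable.sum_add_tsum_nat_add n hf_summable]
  have hI : ∀ m : ℕ, Finset.Icc 1 m = Finset.Ioc 0 m := fun m => Finset.Icc_add_one_left_eq_Ioc 0 m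
  have hPsplit : ∀ i n : ℕ, i + 1 ≤ n →
      P n = P (i + 1) * ∏ j ∈ Finset.Ioc (i + 1) n, (b j : ℝ) := by
    intro i n hin
    simp only [hP, hI]
    exact (Finset.prod_Ioc_consecutive _ (Nat.zero_le (i + 1)) hin).symm
  rintro ⟨q, hq⟩
  have hDpos : (0 : ℝ) < (q.den : ℝ) := by exact_mod_cast q.pos
  have hDx : (q.den : ℝ) * x = (q.num : ℝ) := by
    rw [← hq, Rat.cast_def]
    field_simp
  have key : ∀ n, ∃ K : ℤ, (K : ℝ) = (q.den : ℝ) * (P n * T n) := by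
    intro n
    refine ⟨q.num * (∏ j ∈ Finset.Icc 1 n, b j) -
      (q.den : ℤ) * a 0 * (∏ j ∈ Finset.Icc 1 n, b j) -
      (q.den : ℤ) * ∑ i ∈ Finset.range n, a (i + 1) * ∏ j ∈ Finset.Ioc (i + 1) n, b j, ?_⟩
    have hTn : T n = x - (a 0 : ℝ) - ∑ i ∈ Finset.range n, f i := by
      have := hx_dec n; linarith
    have hsum : ∀ i ∈ Finset.range n, P n * f i =
        (a (i + 1) : ℝ) * ∏ j ∈ Finset.Ioc (i + 1) n, (b j : ℝ) := by
      intro i hi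
      have hin : i + 1 ≤ n := Finset.mem_range.mp hi
      rw [hPsplit i n hin]
      simp only [hf]
      have := (hPpos (i + 1)).ne'
      field_simp
    have hPn_sum : P n * (∑ i ∈ Finset.range n, f i) =
        ∑ i ∈ Finset.range n, (a (i + 1) : ℝ) * ∏ j ∈ Finset.Ioc (i + 1) n, (b j : ℝ) := by
      rw [Finset.mul_sum]
      exact Finset.sum_congr rfl hsum
    have hPc : (∏ i ∈ Finset.Icc 1 n, ((b i : ℤ) : ℝ)) = P n := rfl
    push_cast
    rw [hTn, hPc]
    linear_combination (-(P n)) * hDx + (q.den : ℝ) * hPn_sum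
  have hbound : ∀ n, P n * T n ≤ 1 - 1 / (q.den : ℝ) := by
    intro n
    obtain ⟨K, hK⟩ := key n
    have hPT : P n * T n < 1 := by
      have h1 := hT_lt n
      have h2 := hPpos n
      rw [lt_div_iff₀ h2] at h1
      linarith [mul_comm (T n) (P n)]
    have hPT0 : 0 ≤ P n * T n := mul_nonneg (hPpos n).le (hT0 n)
    have hKlt : (K : ℝ) < (q.den : ℝ) := by
      rw [hK]
      calc (q.den : ℝ) * (P n * T n) < (q.den : ℝ) * 1 := by
            exact mul_lt_mul_of_pos_left hPT hDpos
        _ = (q.den : ℝ) := mul_one _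
    have hK0 : (0 : ℝ) ≤ (K : ℝ) := by
      rw [hK]; positivity
    have hKle : (K : ℝ) ≤ (q.den : ℝ) - 1 := by
      have h1 : K < (q.den : ℤ) := by exact_mod_cast hKlt
      have h2 : K ≤ (q.den : ℤ) - 1 := by omega
      exact_mod_cast h2
    have : (q.den : ℝ) * (P n * T n) ≤ (q.den : ℝ) - 1 := by rw [← hK]; exact hKle
    rw [le_sub_iff_add_le]
    have hinv : (1 / (q.den : ℝ)) * (q.den : ℝ) = 1 := by field_simp
    nlinarith
  have hlt1 : 1 - 1 / (q.den : ℝ) < 1 := by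
    have : 0 < 1 / (q.den : ℝ) := by positivity
    linarith
  obtain ⟨n, hn⟩ := (hlim.eventually (eventually_gt_nhds hlt1)).exists
  set m := idx n - 1 with hmdef
  have hm : m + 1 = idx n := by have := hidx1 n; omega
  have hfm : (a (idx n) : ℝ) / (b (idx n) : ℝ) = P m * f m := by
    rw [← hm]
    simp only [hf, hPsucc m]
    have h2 : (2 : ℝ) ≤ (b (m + 1) : ℝ) := by exact_mod_cast hb (m + 1) (Nat.le_add_left 1 m)
    have hbne : (b (m + 1) : ℝ) ≠ 0 := by linarith
    have hPne : P m ≠ 0 := (hPpos m).ne'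
    field_simp
  have hle : P m * f m ≤ P m * T m := mul_le_mul_of_nonneg_left (hT_ge m) (hPpos m).le
  have := hbound m
  rw [hfm] at hn
  linarith
end
end
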